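/- Let β < 1, ε > 0, and (w_n) a non-negative sequence with w_n ≤ n^{-β+o(1)}, W_n = Σ_{k≤n} w_k = n^{1-β+o(1)}, and suppose liminf_{n→∞} (1/W_n) Σ_{k=1}^n w_k·1_{k ∈ G} > 0 for some set G ⊆ ℕ. Then there exists a constant C_ε > 0 such that for all sufficiently large N, Σ_{k=N}^{⌊N^{1+ε}⌋} (w_k/W_k)·1_{k ∈ G} ≥ C_ε · log N. -/

import Mathlib

open Filter
open scoped Classical

lemma aux1 (a w W T : ℕ → ℝ) (c : ℝ) (N : ℕ)
    (hWpos : ∀ k, N ≤ k → 0 < W k)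
    (hWs : ∀ k, W (k+1) = W k + w (k+1))
    (hTs : ∀ k, T (k+1) = T k + a (k+1))
    (hcw : ∀ k, N ≤ k → c * W k ≤ T k)
    (hwnn : ∀ k, 0 ≤ w k) :
    ∀ M, N ≤ M → T M / W M + c * ∑ k ∈ Finset.Icc (N+1) M, w k / W k
      ≤ T N / W N + ∑ k ∈ Finset.Icc (N+1) M, a k / W k := by
  intro M hM
  induction M, hM using Nat.le_induction with
  | base => simp
  | succ M hM ih =>
    rw [Finset.sum_Icc_succ_top (by omega), Finset.sum_Icc_succ_top (by omega), mul_add]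
    have hWM := hWpos M hM
    have hWM1 := hWpos (M+1) (by omega)
    have hcwM := hcw M hM
    have hw1 := hwnn (M+1)
    have hWe := hWs M
    have key : T (M+1) / W (M+1) + c * (w (M+1) / W (M+1))
        ≤ T M / W M + a (M+1) / W (M+1) := by
      rw [hTs M, add_div]
      have h2 : T M / W (M+1) + c * (w (M+1) / W (M+1)) ≤ T M / W M := by
        rw [mul_div_assoc', ← add_div, div_le_div_iff₀ hWM1 hWM]
        have h3 : (c * W M) * w (M+1) ≤ T M * w (M+1) :=
          mul_le_mul_of_nonneg_right hcwM hw1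
        rw [hWe]; nlinarith [h3]
      linarith
    linarith

lemma aux2 (w W : ℕ → ℝ) (N : ℕ)
    (hWpos : ∀ k, N ≤ k → 0 < W k)
    (hWs : ∀ k, W (k+1) = W k + w (k+1))
    (hwnn : ∀ k, 0 ≤ w k)
    (hhalf : ∀ k, N ≤ k → w (k+1) / W (k+1) ≤ 1/2) :
    ∀ M, N ≤ M → Real.log (W M) - Real.log (W N)
      ≤ 2 * ∑ k ∈ Finset.Icc (N+1) M, w k / W k := by
  intro M hM
  induction M, hM using Nat.le_induction with
  | base => simp
  | succ M hM ih =>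
    rw [Finset.sum_Icc_succ_top (by omega), mul_add]
    have hWM := hWpos M hM
    have hWM1 := hWpos (M+1) (by omega)
    have hw1 := hwnn (M+1)
    have hWe := hWs M
    have hle : w (M+1) ≤ W M := by
      have h := hhalf M hM
      rw [div_le_iff₀ hWM1] at h
      linarith
    suffices h : Real.log (W (M+1)) - Real.log (W M) ≤ 2 * (w (M+1) / W (M+1)) by linarith
    have hlog : Real.log (W (M+1)) - Real.log (W M) = Real.log (W (M+1) / W M) :=
      (Real.log_div (ne_of_gt hWM1) (ne_of_gt hWM)).symm
    have h2 : Real.log (W (M+1) / W M) ≤ W (M+1) / W M - 1 :=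
      Real.log_le_sub_one_of_pos (div_pos hWM1 hWM)
    have h3 : W (M+1) / W M - 1 = w (M+1) / W M := by
      rw [hWe]; field_simp; ring
    have h4 : w (M+1) / W M ≤ 2 * (w (M+1) / W (M+1)) := by
      rw [mul_div_assoc', div_le_div_iff₀ hWM hWM1]
      rw [hWe]; nlinarith [mul_le_mul_of_nonneg_left hle hw1]
    linarith


theorem stmt_13 (β ε : ℝ) (hβ : β < 1) (hε : 0 < ε)
    (w : ℕ → ℝ) (hw : ∀ n, 0 ≤ w n) (W : ℕ → ℝ)
    (hW : ∀ n, W n = ∑ k ∈ Finset.Icc 1 n, w k)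
    (G : Set ℕ)
    -- w_n ≤ n^{-β+o(1)}
    (hwbound : ∃ e : ℕ → ℝ, Tendsto e atTop (nhds 0) ∧
      ∀ n : ℕ, 1 ≤ n → w n ≤ (n : ℝ) ^ (-β + e n))
    -- W_n = n^{1-β+o(1)}
    (hWgrowth : ∃ e : ℕ → ℝ, Tendsto e atTop (nhds 0) ∧
      ∀ n : ℕ, 1 ≤ n → W n = (n : ℝ) ^ (1 - β + e n))
    -- liminf (1/W_n) Σ_{k≤n} w_k 1_{k∈G} > 0
    (hliminf : 0 < atTop.liminf
      (fun n => (∑ k ∈ Finset.Icc 1 n, if k ∈ G then w k else 0) / W n)) :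
    ∃ C > 0, ∀ᶠ N : ℕ in atTop,
      C * Real.log N ≤
        ∑ k ∈ Finset.Icc N ⌊(N : ℝ) ^ (1 + ε)⌋₊, if k ∈ G then w k / W k else 0 := by
  obtain ⟨e, he, hwb⟩ := hwbound
  obtain ⟨e', he', hWe⟩ := hWgrowth
  set T : ℕ → ℝ := fun n => ∑ k ∈ Finset.Icc 1 n, if k ∈ G then w k else 0 with hTdef
  -- basic facts
  have hTnn : ∀ n, 0 ≤ T n := fun n =>
    Finset.sum_nonneg fun k _ => by split <;> simp [hw k]
  have hTleW : ∀ n, T n ≤ W n := fun n => by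
    rw [hW]
    exact Finset.sum_le_sum fun k _ => by split <;> simp [hw k]
  have hWnn : ∀ n, 0 ≤ W n := fun n => by
    rw [hW]; exact Finset.sum_nonneg fun k _ => hw k
  have hWpos : ∀ n, 1 ≤ n → 0 < W n := fun n hn => by
    rw [hWe n hn]
    exact Real.rpow_pos_of_pos (by exact_mod_cast Nat.lt_of_lt_of_le Nat.zero_lt_one hn) _
  have hWstep : ∀ k, W (k+1) = W k + w (k+1) := fun k => by
    rw [hW, hW, Finset.sum_Icc_succ_top (Nat.le_add_left 1 k)]
  have hTstep : ∀ k, T (k+1) = T k + (if (k+1) ∈ G then w (k+1) else 0) := fun k => by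
    simp only [hTdef]
    rw [Finset.sum_Icc_succ_top (Nat.le_add_left 1 k)]
  -- extract c from the liminf
  set L := atTop.liminf (fun n => T n / W n) with hLdef
  have hL : 0 < L := hliminf
  set c := L / 2 with hcdef
  have hc : 0 < c := half_pos hL
  have hbdd : IsBoundedUnder (· ≥ ·) atTop (fun n => T n / W n) :=
    isBoundedUnder_of ⟨0, fun n => div_nonneg (hTnn n) (hWnn n)⟩
  have hcev : ∀ᶠ n in atTop, c < T n / W n :=
    eventually_lt_of_lt_liminf (half_lt_self hL) hbdd
  have hcW : ∀ᶠ n in atTop, c * W n ≤ T n := by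
    filter_upwards [hcev, eventually_ge_atTop 1] with n h h1
    have hWp := hWpos n h1
    rw [lt_div_iff₀ hWp] at h
    linarith
  -- the constants
  set δ : ℝ := min ((1-β)*ε/(2*(2+ε))) ((1-β)/2) with hδdef
  have hδ : 0 < δ :=
    lt_min (div_pos (mul_pos (by linarith) hε) (by linarith)) (by linarith)
  have hδ1 : δ ≤ (1-β)/2 := min_le_right _ _
  have hne : (2:ℝ)+ε ≠ 0 := ne_of_gt (by linarith)
  have hδ2 : δ * (2+ε) ≤ (1-β)*ε/2 := by
    have h : δ ≤ (1-β)*ε/(2*(2+ε)) := min_le_left _ _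
    have heq : ((1-β)*ε/(2*(2+ε)))*(2+ε) = (1-β)*ε/2 := by
      field_simp
    have h2e : (0:ℝ) ≤ 2+ε := by linarith
    calc δ * (2+ε) ≤ ((1-β)*ε/(2*(2+ε))) * (2+ε) :=
          mul_le_mul_of_nonneg_right h h2e
      _ = (1-β)*ε/2 := heq
  set κ : ℝ := (1-β)*ε/2 with hκdef
  have hκ : 0 < κ := div_pos (mul_pos (by linarith) hε) (by norm_num)
  -- eventual smallness of e, e'
  have hEe' : ∀ᶠ n in atTop, |e' n| < min δ (1/4) := by
    have := he'.eventually (Metric.ball_mem_nhds (0:ℝ) (lt_min hδ (show (0:ℝ) < 1/4 by norm_num)))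
    exact this.mono fun n hn => by simpa [Real.dist_eq] using Metric.mem_ball.mp hn
  have hEe : ∀ᶠ n in atTop, |e n| < 1/4 := by
    have := he.eventually (Metric.ball_mem_nhds (0:ℝ) (by norm_num : (0:ℝ) < 1/4))
    exact this.mono fun n hn => by simpa [Real.dist_eq] using Metric.mem_ball.mp hn
  obtain ⟨K₀, hK₀⟩ := eventually_atTop.mp (hcW.and (hEe'.and hEe))
  set K := max K₀ 4 with hKdef
  have hKcW : ∀ k, K ≤ k → c * W k ≤ T k := fun k hk => (hK₀ k (le_trans (le_max_left _ _) hk)).1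
  have hKe' : ∀ k, K ≤ k → |e' k| < δ := fun k hk =>
    lt_of_lt_of_le (hK₀ k (le_trans (le_max_left _ _) hk)).2.1 (min_le_left _ _)
  have hKe'4 : ∀ k, K ≤ k → |e' k| < 1/4 := fun k hk =>
    lt_of_lt_of_le (hK₀ k (le_trans (le_max_left _ _) hk)).2.1 (min_le_right _ _)
  have hKe : ∀ k, K ≤ k → |e k| < 1/4 := fun k hk => (hK₀ k (le_trans (le_max_left _ _) hk)).2.2
  have hK4 : 4 ≤ K := le_max_right _ _
  -- ratio bound: for k ≥ K, w k / W k ≤ 1/2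
  have hhalf : ∀ k, K ≤ k → w k / W k ≤ 1/2 := by
    intro k hk
    have hk1 : 1 ≤ k := by omega
    have hk1' : (1:ℝ) ≤ (k:ℝ) := by exact_mod_cast hk1
    have hkpos : (0:ℝ) < (k:ℝ) := by linarith
    have hWp := hWpos k hk1
    have h1 : w k / W k ≤ ((k:ℝ) ^ (-β + e k)) / W k := by
      gcongr
      exact hwb k hk1
    have h2 : ((k:ℝ) ^ (-β + e k)) / W k = (k:ℝ) ^ ((-β + e k) - (1 - β + e' k)) := by
      rw [hWe k hk1]
      exact (Real.rpow_sub hkpos _ _).symm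
    have h3 : (-β + e k) - (1 - β + e' k) ≤ -(1/2) := by
      have ha := abs_lt.mp (hKe k hk)
      have hb := abs_lt.mp (hKe'4 k hk)
      linarith [ha.1, ha.2, hb.1, hb.2]
    have h4 : (k:ℝ) ^ ((-β + e k) - (1 - β + e' k)) ≤ (k:ℝ) ^ (-(1/2:ℝ)) :=
      Real.rpow_le_rpow_of_exponent_le hk1' h3
    have h5 : (k:ℝ) ^ (-(1/2:ℝ)) ≤ 1/2 := by
      have hk4 : (4:ℝ) ≤ (k:ℝ) := by exact_mod_cast le_trans hK4 hk
      have hsq : (2:ℝ) ≤ (k:ℝ) ^ ((1/2:ℝ)) := by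
        calc (2:ℝ) = (4:ℝ) ^ ((1/2:ℝ)) := by
              rw [show (4:ℝ) = 2^(2:ℕ) by norm_num, ← Real.rpow_natCast (2:ℝ) 2,
                ← Real.rpow_mul (by norm_num)]
              norm_num
          _ ≤ _ := Real.rpow_le_rpow (by norm_num) hk4 (by norm_num)
      rw [Real.rpow_neg hkpos.le]
      have := inv_anti₀ (by norm_num : (0:ℝ) < 2) hsq
      linarith [this]
    linarith
  -- the constant
  set C : ℝ := c * κ / 4 with hCdef
  have hCpos : 0 < C := by
    rw [hCdef]; exact div_pos (mul_pos hc hκ) (by norm_num)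
  refine ⟨C, hCpos, ?_⟩
  have htend : Tendsto (fun N : ℕ => C * Real.log N) atTop atTop :=
    (Real.tendsto_log_atTop.comp tendsto_natCast_atTop_atTop).const_mul_atTop hCpos
  filter_upwards [eventually_ge_atTop (max 2 K),
    htend.eventually_ge_atTop (1 - c + c*(1-β)/2)] with N hNge hN2
  have hNK : K ≤ N := le_trans (le_max_right _ _) hNge
  have hN2n : 2 ≤ N := le_trans (le_max_left _ _) hNge
  have hN1n : 1 ≤ N := by omega
  have hN1R : (1:ℝ) ≤ (N:ℝ) := by exact_mod_cast hN1n
  have h2N : (2:ℝ) ≤ (N:ℝ) := by exact_mod_cast hN2n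
  have hNposR : (0:ℝ) < (N:ℝ) := by linarith
  set M := ⌊(N:ℝ)^(1+ε)⌋₊ with hMdef
  have hNle : (N:ℝ) ≤ (N:ℝ)^(1+ε) := by
    conv_lhs => rw [← Real.rpow_one (N:ℝ)]
    exact Real.rpow_le_rpow_of_exponent_le hN1R (by linarith)
  have hMN : N ≤ M := Nat.le_floor hNle
  have hM1 : 1 ≤ M := le_trans hN1n hMN
  have hM1R : (1:ℝ) ≤ (M:ℝ) := by exact_mod_cast hM1
  have hMposR : (0:ℝ) < (M:ℝ) := by linarith
  have hMhalf : (N:ℝ)^(1+ε)/2 ≤ (M:ℝ) := by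
    have h1 := Nat.sub_one_lt_floor ((N:ℝ)^(1+ε))
    have h2 : (2:ℝ) ≤ (N:ℝ)^(1+ε) := le_trans h2N hNle
    rw [← hMdef] at h1
    linarith
  have hlogM : (1+ε) * Real.log N - 1 ≤ Real.log M := by
    have h1 : Real.log ((N:ℝ)^(1+ε)/2) ≤ Real.log M :=
      Real.log_le_log (by positivity) hMhalf
    rw [Real.log_div (by positivity) (by norm_num), Real.log_rpow hNposR] at h1
    have h2 := Real.log_two_lt_d9
    linarith
  have hlogN0 : 0 ≤ Real.log N := Real.log_nonneg hN1R
  have hlogM0 : 0 ≤ Real.log M := Real.log_nonneg hM1R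
  -- apply the two aux lemmas on the window [N, M]
  have hWposk : ∀ k, N ≤ k → 0 < W k := fun k hk => hWpos k (by omega)
  have hcwk : ∀ k, N ≤ k → c * W k ≤ T k := fun k hk => hKcW k (le_trans hNK hk)
  have habel := aux1 (fun k => if k ∈ G then w k else 0) w W T c N hWposk hWstep
    hTstep hcwk hw M hMN
  have hhalfk : ∀ k, N ≤ k → w (k+1) / W (k+1) ≤ 1/2 := fun k hk =>
    hhalf (k+1) (by omega)
  have hlogsum := aux2 w W N hWposk hWstep hw hhalfk M hMN
  -- lower bound for log (W M) - log (W N)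
  have hlogWM : Real.log (W M) = (1-β+e' M) * Real.log M := by
    rw [hWe M (by omega), Real.log_rpow hMposR]
  have hlogWN : Real.log (W N) = (1-β+e' N) * Real.log N := by
    rw [hWe N (by omega), Real.log_rpow hNposR]
  have haM := abs_lt.mp (hKe' M (le_trans hNK hMN))
  have haN := abs_lt.mp (hKe' N hNK)
  have h7 : κ * Real.log N - (1-β) ≤ Real.log (W M) - Real.log (W N) := by
    rw [hlogWM, hlogWN]
    have hb1 : (1-β-δ) * Real.log M ≤ (1-β+e' M) * Real.log M :=
      mul_le_mul_of_nonneg_right (by linarith [haM.1]) hlogM0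
    have hb2 : (1-β+e' N) * Real.log N ≤ (1-β+δ) * Real.log N :=
      mul_le_mul_of_nonneg_right (by linarith [haN.2]) hlogN0
    have hb3 : (1-β-δ) * ((1+ε)*Real.log N - 1) ≤ (1-β-δ) * Real.log M :=
      mul_le_mul_of_nonneg_left hlogM (by linarith)
    have hb4 : ((1-β)*ε - δ*(2+ε)) * Real.log N - (1-β-δ)
        = (1-β-δ)*((1+ε)*Real.log N - 1) - (1-β+δ)*Real.log N := by ring
    have hb5 : κ * Real.log N ≤ ((1-β)*ε - δ*(2+ε)) * Real.log N :=
      mul_le_mul_of_nonneg_right (by rw [hκdef] at hδ2 ⊢; linarith) hlogN0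
    linarith
  -- endpoints
  have hTM : c ≤ T M / W M :=
    (le_div_iff₀ (hWposk M hMN)).mpr (hKcW M (le_trans hNK hMN))
  have hTN : T N / W N ≤ 1 := div_le_one_of_le₀ (hTleW N) (hWnn N)
  -- combine
  have hconv : (∑ k ∈ Finset.Icc N M, if k ∈ G then w k / W k else 0)
      = ∑ k ∈ Finset.Icc N M, (if k ∈ G then w k else 0) / W k :=
    Finset.sum_congr rfl fun k _ => by split <;> simp
  have hsub : (∑ k ∈ Finset.Icc (N+1) M, (if k ∈ G then w k else 0) / W k)
      ≤ ∑ k ∈ Finset.Icc N M, (if k ∈ G then w k else 0) / W k :=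
    Finset.sum_le_sum_of_subset_of_nonneg (Finset.Icc_subset_Icc_left (by omega))
      (fun k _ _ => div_nonneg (by split; exacts [hw k, le_refl 0]) (hWnn k))
  have hmul : c * (κ * Real.log N - (1-β))
      ≤ c * (2 * ∑ k ∈ Finset.Icc (N+1) M, w k / W k) :=
    mul_le_mul_of_nonneg_left (by linarith) hc.le
  have hrw : c * (κ * Real.log N - (1-β)) = 4*(C*Real.log N) - c*(1-β) := by
    rw [hCdef]; ring
  have hrw2 : c * (2 * ∑ k ∈ Finset.Icc (N+1) M, w k / W k)
      = 2 * (c * ∑ k ∈ Finset.Icc (N+1) M, w k / W k) := by ring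
  rw [hconv]
  linarith [habel, hTM, hTN, hmul, hN2]
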